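/- arXiv:1601.06948 — 2 statements merged into one kernel-verified Lean document; each statement's English description precedes it below -/
import Mathlib

section
/- Let n ≥ 1, let U ⊆ ℝ^{n+1} be open, and let ρ : U → ℝ be smooth with ρ < 0 on U. Set u := −(−2ρ)^{1/2}. Then u is smooth on U and J[ρ](x) = −(−u(x))^{n+3} · det(∂_i∂_j u(x)) for every x ∈ U. -/
open MeasureTheory Topology

noncomputable def pd {m : ℕ} (f : (Fin m → ℝ) → ℝ) (i : Fin m) (x : Fin m → ℝ) : ℝ :=
  fderiv ℝ f x (Pi.single i 1)

noncomputable def hess {m : ℕ} (f : (Fin m → ℝ) → ℝ) (x : Fin m → ℝ) :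
    Matrix (Fin m) (Fin m) ℝ :=
  Matrix.of fun i j => pd (pd f j) i x

noncomputable def Jop {n : ℕ} (ρ : (Fin (n + 1) → ℝ) → ℝ) (x : Fin (n + 1) → ℝ) : ℝ :=
  (Matrix.of (fun I J : Fin (n + 2) =>
    Fin.cases (Fin.cases (2 * ρ x) (fun j => pd ρ j x) J)
      (fun i => Fin.cases (pd ρ i x) (fun j => hess ρ x i j) J) I)).det

/-- Key determinant identity. -/
lemma det_key_aux (m : ℕ) (a : ℝ) (ha : a ≠ 0) (g : Fin (m + 1) → ℝ)
    (H : Matrix (Fin (m + 1)) (Fin (m + 1)) ℝ) :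
    (Matrix.of (fun I J : Fin (m + 2) =>
      Fin.cases (Fin.cases (-(a ^ 2)) (fun j => -(a * g j)) J)
        (fun i => Fin.cases (-(a * g i)) (fun j => -(g i * g j) - a * H i j) J) I)).det
      = (-1 : ℝ) ^ (m + 2) * a ^ (m + 3) * H.det := by
  set L : Matrix (Fin (m + 2)) (Fin (m + 2)) ℝ := Matrix.of (fun I J : Fin (m + 2) =>
    Fin.cases (Fin.cases 1 (fun _ => 0) J)
      (fun i => Fin.cases (g i / a) (fun j => if i = j then (1 : ℝ) else 0) J) I) with hL
  set P : Matrix (Fin (m + 2)) (Fin (m + 2)) ℝ := Matrix.of (fun J K : Fin (m + 2) =>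
    Fin.cases (Fin.cases (a ^ 2) (fun k => a * g k) K)
      (fun j => Fin.cases 0 (fun k => a * H j k) K) J) with hP
  have hM : (Matrix.of (fun I J : Fin (m + 2) =>
      Fin.cases (Fin.cases (-(a ^ 2)) (fun j => -(a * g j)) J)
        (fun i => Fin.cases (-(a * g i)) (fun j => -(g i * g j) - a * H i j) J) I))
      = (-1 : ℝ) • (L * P) := by
    ext I K
    simp only [Matrix.smul_apply, Matrix.mul_apply, Matrix.of_apply, hL, hP, smul_eq_mul,
      neg_one_mul]
    refine Fin.cases ?_ (fun i => ?_) I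
    · rw [Fin.sum_univ_succ]
      refine Fin.cases ?_ (fun k => ?_) K <;>
        simp [Fin.cases_zero, Fin.cases_succ]
    · rw [Fin.sum_univ_succ]
      simp only [Fin.cases_zero, Fin.cases_succ, ite_mul, one_mul, zero_mul,
        Finset.sum_ite_eq, Finset.mem_univ, if_true]
      refine Fin.cases ?_ (fun k => ?_) K <;>
        · simp only [Fin.cases_zero, Fin.cases_succ]
          field_simp
          ring
  rw [hM, Matrix.det_smul, Matrix.det_mul]
  have hdetL : L.det = 1 := by
    rw [Matrix.det_succ_row_zero, Fin.sum_univ_succ]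
    have h1 : L.submatrix Fin.succ ((0 : Fin (m + 2)).succAbove) = 1 := by
      ext i k
      simp [hL, Matrix.one_apply, Fin.zero_succAbove, Matrix.submatrix_apply]
    simp only [hL, Matrix.of_apply, Fin.cases_zero, Fin.cases_succ, Fin.val_zero, pow_zero,
      one_mul, mul_zero, zero_mul, Finset.sum_const_zero, add_zero, h1, Matrix.det_one, mul_one]
    rw [← hL, h1, Matrix.det_one]
  have hdetP : P.det = a ^ (m + 3) * H.det := by
    rw [Matrix.det_succ_column_zero, Fin.sum_univ_succ]
    have h1 : P.submatrix ((0 : Fin (m + 2)).succAbove) Fin.succ = a • H := by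
      ext j k
      simp [hP, Matrix.smul_apply, Fin.zero_succAbove, Matrix.submatrix_apply, smul_eq_mul]
    simp only [hP, Matrix.of_apply, Fin.cases_zero, Fin.cases_succ, Fin.val_zero, pow_zero,
      one_mul, mul_zero, zero_mul, Finset.sum_const_zero, add_zero, h1]
    rw [← hP, h1]
    rw [Matrix.det_smul]
    simp [Fintype.card_fin]
    ring
  rw [hdetL, hdetP]
  simp [Fintype.card_fin]
  ring

lemma pd_eq_aux (m : ℕ) (U : Set (Fin m → ℝ)) (hU : IsOpen U)
    (ρ u : (Fin m → ℝ) → ℝ) (hu : ContDiffOn ℝ (⊤ : ℕ∞) u U)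
    (hρu : ∀ y ∈ U, ρ y = -(1/2) * (u y * u y)) (x : Fin m → ℝ) (hx : x ∈ U) (j : Fin m) :
    pd ρ j x = -(u x) * pd u j x := by
  have hux : ContDiffAt ℝ (⊤ : ℕ∞) u x := hu.contDiffAt (hU.mem_nhds hx)
  have hdu : DifferentiableAt ℝ u x := hux.differentiableAt (by simp)
  have hev : ρ =ᶠ[nhds x] fun y => -(1/2 : ℝ) * (u y * u y) :=
    Filter.eventuallyEq_of_mem (hU.mem_nhds hx) hρu
  have h1 : HasFDerivAt (fun y => -(1/2 : ℝ) * (u y * u y))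
      ((-(1/2 : ℝ)) • (u x • (fderiv ℝ u x) + u x • (fderiv ℝ u x))) x :=
    (hdu.hasFDerivAt.mul hdu.hasFDerivAt).const_mul _
  have h2 : fderiv ℝ ρ x = (-(1/2 : ℝ)) • (u x • (fderiv ℝ u x) + u x • (fderiv ℝ u x)) :=
    hev.fderiv_eq.trans h1.fderiv
  unfold pd
  rw [h2]
  simp only [ContinuousLinearMap.smul_apply, ContinuousLinearMap.add_apply, smul_eq_mul]
  ring

lemma hess_eq_aux (m : ℕ) (U : Set (Fin m → ℝ)) (hU : IsOpen U)
    (ρ u : (Fin m → ℝ) → ℝ) (hu : ContDiffOn ℝ (⊤ : ℕ∞) u U)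
    (hρu : ∀ y ∈ U, ρ y = -(1/2) * (u y * u y)) (x : Fin m → ℝ) (hx : x ∈ U) (i j : Fin m) :
    hess ρ x i j = -(pd u i x * pd u j x) - u x * hess u x i j := by
  have hux : ContDiffAt ℝ (⊤ : ℕ∞) u x := hu.contDiffAt (hU.mem_nhds hx)
  have hdu : DifferentiableAt ℝ u x := hux.differentiableAt (by simp)
  have hq : ContDiffAt ℝ (⊤ : ℕ∞) (pd u j) x := by
    have h1 : ContDiffAt ℝ (⊤ : ℕ∞) (fderiv ℝ u) x :=
      hux.fderiv_right (by exact_mod_cast le_top)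
    exact h1.clm_apply contDiffAt_const
  have hdq : DifferentiableAt ℝ (pd u j) x := hq.differentiableAt (by simp)
  have hev : pd ρ j =ᶠ[nhds x] fun y => -(u y) * pd u j y :=
    Filter.eventuallyEq_of_mem (hU.mem_nhds hx)
      (fun y hy => pd_eq_aux m U hU ρ u hu hρu y hy j)
  have h1 : HasFDerivAt (fun y => -(u y) * pd u j y)
      ((-(u x)) • (fderiv ℝ (pd u j) x) + (pd u j x) • (-(fderiv ℝ u x))) x :=
    (hdu.hasFDerivAt.neg.mul hdq.hasFDerivAt)
  have h2 : fderiv ℝ (pd ρ j) x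
      = (-(u x)) • (fderiv ℝ (pd u j) x) + (pd u j x) • (-(fderiv ℝ u x)) :=
    hev.fderiv_eq.trans h1.fderiv
  have e1 : hess ρ x i j = (fderiv ℝ (pd ρ j) x) (Pi.single i 1) := rfl
  have e2 : hess u x i j = (fderiv ℝ (pd u j) x) (Pi.single i 1) := rfl
  have e3 : pd u i x = (fderiv ℝ u x) (Pi.single i 1) := rfl
  rw [e1, h2, e2, e3]
  simp only [ContinuousLinearMap.smul_apply, ContinuousLinearMap.add_apply,
    ContinuousLinearMap.neg_apply, smul_eq_mul]
  ring



structure IsDefiningFn (n : ℕ) (Ω V : Set (Fin (n + 1) → ℝ)) (ρ : (Fin (n + 1) → ℝ) → ℝ) : Prop where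
  openV : IsOpen V
  frontier_sub : frontier Ω ⊆ V
  smooth : ContDiffOn ℝ (⊤ : ℕ∞) ρ V
  neg_iff : ∀ x ∈ V, (x ∈ Ω ↔ ρ x < 0)
  zero_bdry : ∀ x ∈ frontier Ω, ρ x = 0
  grad_ne : ∀ x ∈ frontier Ω, ∃ i, pd ρ i x ≠ 0

def StrictlyConvexWith (n : ℕ) (Ω : Set (Fin (n + 1) → ℝ)) (ρ : (Fin (n + 1) → ℝ) → ℝ) : Prop :=
  ∀ p ∈ frontier Ω, ∀ w : Fin (n + 1) → ℝ, w ≠ 0 →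
    (∑ i, pd ρ i p * w i) = 0 → 0 < ∑ i, ∑ j, hess ρ p i j * w i * w j

structure IsBddStrictlyConvexDomain (n : ℕ) (Ω : Set (Fin (n + 1) → ℝ)) : Prop where
  isOpen : IsOpen Ω
  nonempty : Ω.Nonempty
  bounded : Bornology.IsBounded Ω
  convexBdry : ∃ V ρ, IsDefiningFn n Ω V ρ ∧ StrictlyConvexWith n Ω ρ

/-- With `u := -(-2ρ)^(1/2)`, one has `J[ρ] = -(-u)^(n+3) * det(Hess u)`. -/
theorem stmt2 (n : ℕ) (hn : 1 ≤ n) (U : Set (Fin (n + 1) → ℝ)) (hU : IsOpen U)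
    (ρ : (Fin (n + 1) → ℝ) → ℝ) (hρ : ContDiffOn ℝ (⊤ : ℕ∞) ρ U)
    (hneg : ∀ x ∈ U, ρ x < 0) :
    ContDiffOn ℝ (⊤ : ℕ∞) (fun y => -Real.sqrt (-2 * ρ y)) U ∧
    ∀ x ∈ U,
      Jop ρ x =
        -((-(fun y => -Real.sqrt (-2 * ρ y)) x) ^ (n + 3) *
          (hess (fun y => -Real.sqrt (-2 * ρ y)) x).det) := by

  set u : (Fin (n + 1) → ℝ) → ℝ := fun y => -Real.sqrt (-2 * ρ y) with hu_def
  have hρu : ∀ y ∈ U, ρ y = -(1/2) * (u y * u y) := by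
    intro y hy
    have h2 : (0:ℝ) ≤ -2 * ρ y := by nlinarith [hneg y hy]
    have h3 := Real.mul_self_sqrt h2
    simp only [hu_def]
    nlinarith [h3]
  have husmooth : ContDiffOn ℝ (⊤ : ℕ∞) u U := by
    have h1 : ContDiffOn ℝ (⊤ : ℕ∞) (fun y => -2 * ρ y) U := contDiffOn_const.mul hρ
    exact (h1.sqrt (fun x hx => by nlinarith [hneg x hx])).neg
  refine ⟨husmooth, ?_⟩
  intro x hx
  have ha : u x ≠ 0 := by
    have h2 : (0:ℝ) < -2 * ρ x := by nlinarith [hneg x hx]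
    have h3 : Real.sqrt (-2 * ρ x) ≠ 0 := by positivity
    simp only [hu_def, neg_ne_zero]
    exact h3
  have hM : (Matrix.of (fun I J : Fin (n + 2) =>
      Fin.cases (Fin.cases (2 * ρ x) (fun j => pd ρ j x) J)
        (fun i => Fin.cases (pd ρ i x) (fun j => hess ρ x i j) J) I)
        : Matrix (Fin (n + 2)) (Fin (n + 2)) ℝ)
      = (Matrix.of (fun I J : Fin (n + 2) =>
      Fin.cases (Fin.cases (-((u x) ^ 2)) (fun j => -(u x * pd u j x)) J)
        (fun i => Fin.cases (-(u x * pd u i x))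
          (fun j => -(pd u i x * pd u j x) - u x * hess u x i j) J) I)) := by
    ext I J
    simp only [Matrix.of_apply]
    refine Fin.cases ?_ (fun i => ?_) I <;> refine Fin.cases ?_ (fun j => ?_) J <;>
      simp only [Fin.cases_zero, Fin.cases_succ]
    · rw [hρu x hx]; ring
    · rw [pd_eq_aux (n+1) U hU ρ u husmooth hρu x hx]; ring
    · rw [pd_eq_aux (n+1) U hU ρ u husmooth hρu x hx]; ring
    · rw [hess_eq_aux (n+1) U hU ρ u husmooth hρu x hx]
  have hdet := det_key_aux n (u x) ha (fun i => pd u i x) (hess u x)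
  unfold Jop
  rw [hM, hdet]
  have hneg_apply : (-(fun y => -Real.sqrt (-2 * ρ y)) x) = -(u x) := rfl
  rw [hneg_apply]
  have hpow : ((-1 : ℝ)) ^ (n + 3) = -((-1 : ℝ)) ^ (n + 2) := by rw [pow_succ]; ring
  rw [neg_pow (u x), hpow]
  ring
end

section
/- Let n ≥ 1, let U ⊆ ℝ^{n+1} be open, and let ρ, f : U → ℝ be smooth with f > 0 on U. Then there exists a smooth function g : U → ℝ such that J[f·ρ] = f^{n+2} · J[ρ] + g·ρ on U. -/
open MeasureTheory Topology

/-! ### Auxiliary lemmas -/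

private lemma contDiffOn_pd {m : ℕ} {U : Set (Fin m → ℝ)} (hU : IsOpen U)
    {f : (Fin m → ℝ) → ℝ} (hf : ContDiffOn ℝ (⊤ : ℕ∞) f U) (i : Fin m) :
    ContDiffOn ℝ (⊤ : ℕ∞) (pd f i) U :=
  (hf.fderiv_of_isOpen hU (by simp)).clm_apply contDiffOn_const

private lemma contDiffOn_hess {m : ℕ} {U : Set (Fin m → ℝ)} (hU : IsOpen U)
    {f : (Fin m → ℝ) → ℝ} (hf : ContDiffOn ℝ (⊤ : ℕ∞) f U) (i j : Fin m) :
    ContDiffOn ℝ (⊤ : ℕ∞) (fun x => hess f x i j) U :=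
  contDiffOn_pd hU (contDiffOn_pd hU hf j) i

private lemma contDiffOn_finprod {ι : Type*} {m : ℕ} {U : Set (Fin m → ℝ)} (s : Finset ι)
    {f : ι → (Fin m → ℝ) → ℝ} (h : ∀ i ∈ s, ContDiffOn ℝ (⊤ : ℕ∞) (f i) U) :
    ContDiffOn ℝ (⊤ : ℕ∞) (fun x => ∏ i ∈ s, f i x) U := by
  induction s using Finset.cons_induction with
  | empty => simpa using contDiffOn_const
  | cons a s ha ih =>
      simp only [Finset.prod_cons]
      exact (h a (Finset.mem_cons_self a s)).mul
        (ih fun i hi => h i (Finset.mem_cons_of_mem hi))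

private lemma contDiffOn_det {k m : ℕ} {U : Set (Fin m → ℝ)}
    {M : (Fin m → ℝ) → Matrix (Fin k) (Fin k) ℝ}
    (h : ∀ i j, ContDiffOn ℝ (⊤ : ℕ∞) (fun x => M x i j) U) :
    ContDiffOn ℝ (⊤ : ℕ∞) (fun x => (M x).det) U := by
  have he : (fun x => (M x).det)
      = fun x => ∑ σ : Equiv.Perm (Fin k), ((Equiv.Perm.sign σ : ℤ) : ℝ) * ∏ i, M x (σ i) i := by
    funext x; rw [Matrix.det_apply']
  rw [he]
  exact ContDiffOn.sum fun σ _ =>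
    contDiffOn_const.mul (contDiffOn_finprod Finset.univ fun i _ => h (σ i) i)

private lemma det_add_smul_expand {k : ℕ} (A B : Matrix (Fin k) (Fin k) ℝ) (t : ℝ) :
    (A + t • B).det
      = ∑ s : Finset (Fin k), t ^ s.card * Matrix.det (Matrix.of (s.piecewise B A)) := by
  have h : (A + t • B).det
      = Matrix.detRowAlternating.toMultilinearMap
        (((fun i => t • B i) : Fin k → Fin k → ℝ) + ((fun i => A i) : Fin k → Fin k → ℝ)) := by
    rw [add_comm A (t • B)]; rfl
  rw [h, MultilinearMap.map_add_univ]
  refine Finset.sum_congr rfl fun s _ => ?_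
  have h2 : s.piecewise (fun i => t • B i) ((fun i => A i) : Fin k → Fin k → ℝ)
      = s.piecewise (fun i => t • (s.piecewise B A : Fin k → Fin k → ℝ) i)
          (s.piecewise B A : Fin k → Fin k → ℝ) := by
    refine s.piecewise_congr (fun i hi => ?_) (fun i hi => ?_)
    · simp [Finset.piecewise, hi]
    · simp [Finset.piecewise, hi]
  rw [h2, MultilinearMap.map_piecewise_smul, Finset.prod_const, smul_eq_mul]
  rfl

private lemma pd_mul_eq {m : ℕ} {U : Set (Fin m → ℝ)} (hU : IsOpen U)
    {f ρ : (Fin m → ℝ) → ℝ} (hf : ContDiffOn ℝ (⊤ : ℕ∞) f U)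
    (hρ : ContDiffOn ℝ (⊤ : ℕ∞) ρ U) {x : Fin m → ℝ} (hx : x ∈ U) (j : Fin m) :
    pd (fun y => f y * ρ y) j x = f x * pd ρ j x + ρ x * pd f j x := by
  have hfd : DifferentiableAt ℝ f x :=
    (hf.contDiffAt (hU.mem_nhds hx)).differentiableAt (by simp)
  have hρd : DifferentiableAt ℝ ρ x :=
    (hρ.contDiffAt (hU.mem_nhds hx)).differentiableAt (by simp)
  unfold pd
  rw [fderiv_fun_mul hfd hρd]
  simp [pd]

private lemma hess_mul_eq {m : ℕ} {U : Set (Fin m → ℝ)} (hU : IsOpen U)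
    {f ρ : (Fin m → ℝ) → ℝ} (hf : ContDiffOn ℝ (⊤ : ℕ∞) f U)
    (hρ : ContDiffOn ℝ (⊤ : ℕ∞) ρ U) {x : Fin m → ℝ} (hx : x ∈ U) (i j : Fin m) :
    hess (fun y => f y * ρ y) x i j
      = f x * hess ρ x i j + pd f i x * pd ρ j x + pd ρ i x * pd f j x + ρ x * hess f x i j := by
  have hev : pd (fun y => f y * ρ y) j =ᶠ[nhds x] (fun y => f y * pd ρ j y + ρ y * pd f j y) := by
    filter_upwards [hU.mem_nhds hx] with y hy
    exact pd_mul_eq hU hf hρ hy j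
  have hfd : DifferentiableAt ℝ f x :=
    (hf.contDiffAt (hU.mem_nhds hx)).differentiableAt (by simp)
  have hρd : DifferentiableAt ℝ ρ x :=
    (hρ.contDiffAt (hU.mem_nhds hx)).differentiableAt (by simp)
  have hpdf : DifferentiableAt ℝ (pd f j) x :=
    ((contDiffOn_pd hU hf j).contDiffAt (hU.mem_nhds hx)).differentiableAt (by simp)
  have hpdρ : DifferentiableAt ℝ (pd ρ j) x :=
    ((contDiffOn_pd hU hρ j).contDiffAt (hU.mem_nhds hx)).differentiableAt (by simp)
  rw [show hess (fun y => f y * ρ y) x i j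
      = fderiv ℝ (pd (fun y => f y * ρ y) j) x (Pi.single i 1) from rfl, hev.fderiv_eq]
  rw [fderiv_fun_add (hfd.fun_mul hpdρ) (hρd.fun_mul hpdf), fderiv_fun_mul hfd hpdρ, fderiv_fun_mul hρd hpdf]
  simp only [ContinuousLinearMap.add_apply, ContinuousLinearMap.coe_smul', Pi.smul_apply,
    smul_eq_mul]
  show f x * pd (pd ρ j) i x + pd ρ j x * pd f i x
      + (ρ x * pd (pd f j) i x + pd f j x * pd ρ i x) = _
  have h1 : hess ρ x i j = pd (pd ρ j) i x := rfl
  have h2 : hess f x i j = pd (pd f j) i x := rfl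
  rw [h1, h2]; ring

private noncomputable def Mm {n : ℕ} (φ : (Fin (n + 1) → ℝ) → ℝ) (x : Fin (n + 1) → ℝ) :
    Matrix (Fin (n + 2)) (Fin (n + 2)) ℝ :=
  Matrix.of (fun I J : Fin (n + 2) =>
    Fin.cases (Fin.cases (2 * φ x) (fun j => pd φ j x) J)
      (fun i => Fin.cases (pd φ i x) (fun j => hess φ x i j) J) I)

private lemma Jop_eq_det_Mm {n : ℕ} (φ : (Fin (n + 1) → ℝ) → ℝ) (x : Fin (n + 1) → ℝ) :
    Jop φ x = (Mm φ x).det := rfl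

private noncomputable def cv {n : ℕ} (f : (Fin (n + 1) → ℝ) → ℝ) (x : Fin (n + 1) → ℝ) :
    Fin (n + 2) → ℝ :=
  Fin.cases 0 (fun j => pd f j x / f x)

private noncomputable def Cm {n : ℕ} (f : (Fin (n + 1) → ℝ) → ℝ) (x : Fin (n + 1) → ℝ) :
    Matrix (Fin (n + 2)) (Fin (n + 2)) ℝ :=
  Matrix.of fun I J => (if I = J then 1 else 0) + (if I = 0 then cv f x J else 0)

private noncomputable def Pm {n : ℕ} (ρ f : (Fin (n + 1) → ℝ) → ℝ) (x : Fin (n + 1) → ℝ) :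
    Matrix (Fin (n + 2)) (Fin (n + 2)) ℝ :=
  (Cm f x).transpose * (f x • Mm ρ x) * Cm f x

private noncomputable def Sm {n : ℕ} (f : (Fin (n + 1) → ℝ) → ℝ) (x : Fin (n + 1) → ℝ) :
    Matrix (Fin (n + 2)) (Fin (n + 2)) ℝ :=
  Matrix.of (fun I J : Fin (n + 2) =>
    Fin.cases (Fin.cases 0 (fun j => -pd f j x) J)
      (fun i => Fin.cases (-pd f i x)
        (fun j => hess f x i j - 2 * pd f i x * pd f j x / f x) J) I)

private lemma Cm_det {n : ℕ} (f : (Fin (n + 1) → ℝ) → ℝ) (x : Fin (n + 1) → ℝ) :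
    (Cm f x).det = 1 := by
  have htri : (Cm f x).BlockTriangular id := by
    intro I J hIJ
    have hIJ' : J < I := hIJ
    have h1 : I ≠ J := (ne_of_gt hIJ')
    have h2 : I ≠ 0 := by
      intro h; rw [h] at hIJ'; exact absurd hIJ' (by simp [Fin.not_lt_zero])
    simp [Cm, h1.symm, Ne.symm h1, h2, if_neg]
    intro h; exact absurd h h1
  rw [Matrix.det_of_upperTriangular htri]
  have hdiag : ∀ I : Fin (n + 2), Cm f x I I = 1 := by
    intro I
    by_cases hI : I = 0
    · subst hI; simp [Cm, cv]
    · simp [Cm, hI]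
  simp [hdiag]

private lemma congr_entry {k : ℕ} (A : Matrix (Fin (k + 1)) (Fin (k + 1)) ℝ)
    (c : Fin (k + 1) → ℝ)
    (C : Matrix (Fin (k + 1)) (Fin (k + 1)) ℝ)
    (hC : C = Matrix.of fun I J => (if I = J then 1 else 0) + (if I = 0 then c J else 0))
    (I J : Fin (k + 1)) :
    (C.transpose * A * C) I J
      = A I J + c I * A 0 J + c J * A I 0 + c I * c J * A 0 0 := by
  subst hC
  simp only [Matrix.mul_apply, Matrix.transpose_apply, Matrix.of_apply]
  simp only [add_mul, mul_add, Finset.sum_add_distrib, ite_mul, mul_ite, zero_mul, mul_zero,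
    one_mul, mul_one, Finset.sum_ite_eq, Finset.sum_ite_eq', Finset.mem_univ, if_true]
  ring

private lemma Pm_entry {n : ℕ} (ρ f : (Fin (n + 1) → ℝ) → ℝ) (x : Fin (n + 1) → ℝ)
    (I J : Fin (n + 2)) :
    Pm ρ f x I J
      = f x * Mm ρ x I J + cv f x I * (f x * Mm ρ x 0 J) + cv f x J * (f x * Mm ρ x I 0)
        + cv f x I * cv f x J * (f x * Mm ρ x 0 0) := by
  rw [Pm, congr_entry (f x • Mm ρ x) (cv f x) (Cm f x) rfl]
  simp [Matrix.smul_apply, smul_eq_mul]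

private lemma Pm_det {n : ℕ} (ρ f : (Fin (n + 1) → ℝ) → ℝ) (x : Fin (n + 1) → ℝ) :
    (Pm ρ f x).det = f x ^ (n + 2) * (Mm ρ x).det := by
  rw [Pm, Matrix.det_mul, Matrix.det_mul, Matrix.det_transpose, Cm_det, Matrix.det_smul]
  simp

private lemma decomp {n : ℕ} {U : Set (Fin (n + 1) → ℝ)} (hU : IsOpen U)
    {ρ f : (Fin (n + 1) → ℝ) → ℝ}
    (hρ : ContDiffOn ℝ (⊤ : ℕ∞) ρ U) (hf : ContDiffOn ℝ (⊤ : ℕ∞) f U)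
    (hfpos : ∀ x ∈ U, 0 < f x) {x : Fin (n + 1) → ℝ} (hx : x ∈ U) :
    Mm (fun y => f y * ρ y) x = Pm ρ f x + ρ x • Sm f x := by
  have hf0 : f x ≠ 0 := ne_of_gt (hfpos x hx)
  ext I J
  rw [Matrix.add_apply, Matrix.smul_apply, Pm_entry, smul_eq_mul]
  refine Fin.cases ?_ (fun i => ?_) I <;> refine Fin.cases ?_ (fun j => ?_) J
  · simp only [Mm, Sm, cv, Matrix.of_apply, Fin.cases_zero]
    ring
  · simp only [Mm, Sm, cv, Matrix.of_apply, Fin.cases_zero, Fin.cases_succ]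
    rw [pd_mul_eq hU hf hρ hx j]
    field_simp
    ring
  · simp only [Mm, Sm, cv, Matrix.of_apply, Fin.cases_zero, Fin.cases_succ]
    rw [pd_mul_eq hU hf hρ hx i]
    field_simp
    ring
  · simp only [Mm, Sm, cv, Matrix.of_apply, Fin.cases_zero, Fin.cases_succ]
    rw [hess_mul_eq hU hf hρ hx i j]
    field_simp
    ring

private noncomputable def gfun {n : ℕ} (ρ f : (Fin (n + 1) → ℝ) → ℝ)
    (x : Fin (n + 1) → ℝ) : ℝ :=
  ∑ s ∈ Finset.univ.erase (∅ : Finset (Fin (n + 2))),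
    ρ x ^ (s.card - 1) * Matrix.det (Matrix.of (s.piecewise (Sm f x) (Pm ρ f x)))

private lemma Mm_entry_smooth {n : ℕ} {U : Set (Fin (n + 1) → ℝ)} (hU : IsOpen U)
    {φ : (Fin (n + 1) → ℝ) → ℝ} (hφ : ContDiffOn ℝ (⊤ : ℕ∞) φ U) (I J : Fin (n + 2)) :
    ContDiffOn ℝ (⊤ : ℕ∞) (fun x => Mm φ x I J) U := by
  refine Fin.cases ?_ (fun i => ?_) I <;> refine Fin.cases ?_ (fun j => ?_) J
  · simp only [Mm, Matrix.of_apply, Fin.cases_zero]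
    exact contDiffOn_const.mul hφ
  · simp only [Mm, Matrix.of_apply, Fin.cases_zero, Fin.cases_succ]
    exact contDiffOn_pd hU hφ j
  · simp only [Mm, Matrix.of_apply, Fin.cases_zero, Fin.cases_succ]
    exact contDiffOn_pd hU hφ i
  · simp only [Mm, Matrix.of_apply, Fin.cases_succ]
    exact contDiffOn_hess hU hφ i j

private lemma cv_smooth {n : ℕ} {U : Set (Fin (n + 1) → ℝ)} (hU : IsOpen U)
    {f : (Fin (n + 1) → ℝ) → ℝ} (hf : ContDiffOn ℝ (⊤ : ℕ∞) f U)
    (hfpos : ∀ x ∈ U, 0 < f x) (I : Fin (n + 2)) :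
    ContDiffOn ℝ (⊤ : ℕ∞) (fun x => cv f x I) U := by
  refine Fin.cases ?_ (fun i => ?_) I
  · simp only [cv, Fin.cases_zero]
    exact contDiffOn_const
  · simp only [cv, Fin.cases_succ]
    exact (contDiffOn_pd hU hf i).div hf fun x hx => ne_of_gt (hfpos x hx)

private lemma Pm_entry_smooth {n : ℕ} {U : Set (Fin (n + 1) → ℝ)} (hU : IsOpen U)
    {ρ f : (Fin (n + 1) → ℝ) → ℝ}
    (hρ : ContDiffOn ℝ (⊤ : ℕ∞) ρ U) (hf : ContDiffOn ℝ (⊤ : ℕ∞) f U)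
    (hfpos : ∀ x ∈ U, 0 < f x) (I J : Fin (n + 2)) :
    ContDiffOn ℝ (⊤ : ℕ∞) (fun x => Pm ρ f x I J) U := by
  have he : (fun x => Pm ρ f x I J)
      = fun x => f x * Mm ρ x I J + cv f x I * (f x * Mm ρ x 0 J)
          + cv f x J * (f x * Mm ρ x I 0) + cv f x I * cv f x J * (f x * Mm ρ x 0 0) := by
    funext x; exact Pm_entry ρ f x I J
  rw [he]
  exact (((hf.mul (Mm_entry_smooth hU hρ I J)).add
    ((cv_smooth hU hf hfpos I).mul (hf.mul (Mm_entry_smooth hU hρ 0 J)))).add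
    ((cv_smooth hU hf hfpos J).mul (hf.mul (Mm_entry_smooth hU hρ I 0)))).add
    (((cv_smooth hU hf hfpos I).mul (cv_smooth hU hf hfpos J)).mul
      (hf.mul (Mm_entry_smooth hU hρ 0 0)))

private lemma Sm_entry_smooth {n : ℕ} {U : Set (Fin (n + 1) → ℝ)} (hU : IsOpen U)
    {f : (Fin (n + 1) → ℝ) → ℝ} (hf : ContDiffOn ℝ (⊤ : ℕ∞) f U)
    (hfpos : ∀ x ∈ U, 0 < f x) (I J : Fin (n + 2)) :
    ContDiffOn ℝ (⊤ : ℕ∞) (fun x => Sm f x I J) U := by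
  refine Fin.cases ?_ (fun i => ?_) I <;> refine Fin.cases ?_ (fun j => ?_) J
  · simp only [Sm, Matrix.of_apply, Fin.cases_zero]
    exact contDiffOn_const
  · simp only [Sm, Matrix.of_apply, Fin.cases_zero, Fin.cases_succ]
    exact (contDiffOn_pd hU hf j).neg
  · simp only [Sm, Matrix.of_apply, Fin.cases_zero, Fin.cases_succ]
    exact (contDiffOn_pd hU hf i).neg
  · simp only [Sm, Matrix.of_apply, Fin.cases_succ]
    exact (contDiffOn_hess hU hf i j).sub
      (((contDiffOn_const.mul (contDiffOn_pd hU hf i)).mul (contDiffOn_pd hU hf j)).div hf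
        fun x hx => ne_of_gt (hfpos x hx))

private lemma gfun_smooth {n : ℕ} {U : Set (Fin (n + 1) → ℝ)} (hU : IsOpen U)
    {ρ f : (Fin (n + 1) → ℝ) → ℝ}
    (hρ : ContDiffOn ℝ (⊤ : ℕ∞) ρ U) (hf : ContDiffOn ℝ (⊤ : ℕ∞) f U)
    (hfpos : ∀ x ∈ U, 0 < f x) :
    ContDiffOn ℝ (⊤ : ℕ∞) (gfun ρ f) U := by
  refine ContDiffOn.sum fun s _ => (hρ.pow _).mul (contDiffOn_det fun i j => ?_)
  by_cases hi : i ∈ s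
  · have he : (fun x => Matrix.of (s.piecewise (Sm f x) (Pm ρ f x)) i j)
        = fun x => Sm f x i j := by
      funext x
      simp [Finset.piecewise, hi]
    rw [he]; exact Sm_entry_smooth hU hf hfpos i j
  · have he : (fun x => Matrix.of (s.piecewise (Sm f x) (Pm ρ f x)) i j)
        = fun x => Pm ρ f x i j := by
      funext x
      simp [Finset.piecewise, hi]
    rw [he]; exact Pm_entry_smooth hU hρ hf hfpos i j

/-- Variational lemma (i): `J[fρ] = f^(n+2) J[ρ] + O(ρ)`. -/
theorem stmt3 (n : ℕ) (hn : 1 ≤ n) (U : Set (Fin (n + 1) → ℝ)) (hU : IsOpen U)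
    (ρ f : (Fin (n + 1) → ℝ) → ℝ)
    (hρ : ContDiffOn ℝ (⊤ : ℕ∞) ρ U) (hf : ContDiffOn ℝ (⊤ : ℕ∞) f U)
    (hfpos : ∀ x ∈ U, 0 < f x) :
    ∃ g : (Fin (n + 1) → ℝ) → ℝ, ContDiffOn ℝ (⊤ : ℕ∞) g U ∧
      ∀ x ∈ U, Jop (fun y => f y * ρ y) x = f x ^ (n + 2) * Jop ρ x + g x * ρ x := by
  refine ⟨gfun ρ f, gfun_smooth hU hρ hf hfpos, fun x hx => ?_⟩
  rw [Jop_eq_det_Mm, decomp hU hρ hf hfpos hx, det_add_smul_expand,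
    ← Finset.add_sum_erase _ _ (Finset.mem_univ (∅ : Finset (Fin (n + 2))))]
  have h0 : Matrix.of ((∅ : Finset (Fin (n + 2))).piecewise (Sm f x) (Pm ρ f x)) = Pm ρ f x := by
    ext i j; simp [Finset.piecewise]
  rw [h0]
  simp only [Finset.card_empty, pow_zero, one_mul]
  rw [Pm_det, ← Jop_eq_det_Mm]
  congr 1
  rw [gfun, Finset.sum_mul]
  refine Finset.sum_congr rfl fun s hs => ?_
  have hne : s ≠ ∅ := Finset.ne_of_mem_erase hs
  have hcard : 1 ≤ s.card := Finset.card_pos.mpr (Finset.nonempty_of_ne_empty hne)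
  have hpow : ρ x ^ s.card = ρ x ^ (s.card - 1) * ρ x := by
    conv_lhs => rw [show s.card = s.card - 1 + 1 from (Nat.succ_pred_eq_of_pos hcard).symm]
    rw [pow_succ]
  rw [hpow]; ring
end
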